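/- Liouville–Ostrogradski type formula: under the stated bi-orthogonality setup, for every m ≥ 0 and all z ∈ ℂ: B^{(1)}_m(z) G_m(z) − V_{m+1}(z) G^{(1)}_{m-1}(z) = A_m^{-1}, where A_m is the nonsingular coefficient appearing in the three-term recurrence relation. -/

import Mathlib

open Polynomial Matrix Finset

noncomputable section

/-- `N × N` matrices with polynomial entries, viewed as matrix polynomials. -/
abbrev MatPoly (N : ℕ) := Matrix (Fin N) (Fin N) (Polynomial ℂ)

/-- Evaluation of a matrix polynomial at a complex number (entrywise evaluation). -/
def evalM {N : ℕ} (Q : MatPoly N) (z : ℂ) : Matrix (Fin N) (Fin N) ℂ :=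
  Q.map (Polynomial.eval z)

/-- Composition of a matrix polynomial with a scalar polynomial `h` (entrywise). -/
def compH {N : ℕ} (Q : MatPoly N) (h : Polynomial ℂ) : MatPoly N :=
  Q.map fun p => p.comp h

/-- The vector polynomial `P₀(x) = [1, x, …, x^{N-1}]ᵀ`. -/
def P0 (N : ℕ) : Fin N → Polynomial ℂ := fun i => Polynomial.X ^ (i : ℕ)

/-- Action of a vector of linear functionals `U` on a vector polynomial `P`:
the matrix with `(i,j)` entry `u^j(p_i)`. -/
def applyU {N : ℕ} (U : Fin N → (Polynomial ℂ →ₗ[ℂ] ℂ)) (P : Fin N → Polynomial ℂ) :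
    Matrix (Fin N) (Fin N) ℂ := Matrix.of fun i j => U j (P i)

/-- The vector polynomial `B(x) = V(h(x)) P₀(x)` associated to a matrix polynomial `V`. -/
def Bvec {N : ℕ} (V : MatPoly N) (h : Polynomial ℂ) : Fin N → Polynomial ℂ :=
  (compH V h).mulVec (P0 N)

/-- `((Qᵀ U)(P))_{i,j} = Σ_s u^s (Q_{s,j} p_i)`. -/
def transApply {N : ℕ} (U : Fin N → (Polynomial ℂ →ₗ[ℂ] ℂ)) (Q : MatPoly N)
    (P : Fin N → Polynomial ℂ) : Matrix (Fin N) (Fin N) ℂ :=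
  Matrix.of fun i j => ∑ s, U s (Q s j * P i)

/-- The difference quotient `(p(z) - p(h(x)))/(z - h(x))` as a polynomial in the outer
variable `z` with coefficients polynomials in the inner variable `x`. -/
def diffQuot (p h : Polynomial ℂ) : Polynomial (Polynomial ℂ) :=
  (p.map (Polynomial.C : ℂ →+* Polynomial ℂ) - Polynomial.C (p.comp h)) /ₘ
    (Polynomial.X - Polynomial.C h)

/-- Apply a linear functional to the (inner-variable) coefficients of a two-variable
polynomial, leaving a polynomial in the outer variable. -/
def applyCoeff (u : Polynomial ℂ →ₗ[ℂ] ℂ) (q : Polynomial (Polynomial ℂ)) : Polynomial ℂ :=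
  q.sum fun n a => Polynomial.monomial n (u a)

/-- The first kind associated polynomial built from `W = V_{m+1}`:
`B⁽¹⁾_m(z) = U_x( ((W(z) - W(h(x)))/(z - h(x))) · P₀(x) )`. -/
def assocB {N : ℕ} (U : Fin N → (Polynomial ℂ →ₗ[ℂ] ℂ)) (W : MatPoly N) (h : Polynomial ℂ) :
    MatPoly N :=
  Matrix.of fun i j =>
    applyCoeff (U j) (∑ s, diffQuot (W i s) h * Polynomial.C (Polynomial.X ^ (s : ℕ)))

/-- The first kind associated polynomial built from `W = G_{m+1}`:
`G⁽¹⁾_m(z) = ( ((W(z) - W(h(x)))ᵀ/(z - h(x))) U_x )(P₀(x))`. -/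
def assocG {N : ℕ} (U : Fin N → (Polynomial ℂ →ₗ[ℂ] ℂ)) (W : MatPoly N) (h : Polynomial ℂ) :
    MatPoly N :=
  Matrix.of fun i j =>
    ∑ s, applyCoeff (U s) (diffQuot (W s j) h * Polynomial.C (Polynomial.X ^ (i : ℕ)))

/-- The shifted sequence of first kind associated polynomials: `B1seq U V h k = B⁽¹⁾_{k-1}`,
with the convention `B⁽¹⁾_{-1} = 0`. -/
def B1seq {N : ℕ} (U : Fin N → (Polynomial ℂ →ₗ[ℂ] ℂ)) (V : ℕ → MatPoly N)
    (h : Polynomial ℂ) : ℕ → MatPoly N :=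
  fun k => if k = 0 then 0 else assocB U (V k) h

/-- The shifted sequence `G1seq U G h k = G⁽¹⁾_{k-1}`, with `G⁽¹⁾_{-1} = 0`. -/
def G1seq {N : ℕ} (U : Fin N → (Polynomial ℂ →ₗ[ℂ] ℂ)) (G : ℕ → MatPoly N)
    (h : Polynomial ℂ) : ℕ → MatPoly N :=
  fun k => if k = 0 then 0 else assocG U (G k) h


-- AUX LEMMAS
lemma dq_spec (p h : Polynomial ℂ) :
    diffQuot p h * (Polynomial.X - Polynomial.C h)
      = p.map (Polynomial.C : ℂ →+* Polynomial ℂ) - Polynomial.C (p.comp h) := by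
  have hd : (Polynomial.X - Polynomial.C h) ∣
      (p.map (Polynomial.C : ℂ →+* Polynomial ℂ) - Polynomial.C (p.comp h)) := by
    rw [Polynomial.dvd_iff_isRoot]
    simp [Polynomial.IsRoot, Polynomial.eval_map, Polynomial.comp, Polynomial.eval₂]
  have hm : (Polynomial.X - Polynomial.C h).Monic := Polynomial.monic_X_sub_C h
  have h2 := Polynomial.modByMonic_add_div
    (p.map (Polynomial.C : ℂ →+* Polynomial ℂ) - Polynomial.C (p.comp h)) (Polynomial.X - Polynomial.C h)
  rw [(Polynomial.modByMonic_eq_zero_iff_dvd hm).2 hd] at h2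
  rw [diffQuot]; linear_combination h2

lemma czh_ne (h : Polynomial ℂ) (hdeg : 1 ≤ h.natDegree) (z : ℂ) :
    Polynomial.C z - h ≠ 0 := by
  intro he
  have : h = Polynomial.C z := by linear_combination -he
  rw [this] at hdeg; simp at hdeg

lemma dq_eval_spec (p h : Polynomial ℂ) (z : ℂ) :
    (diffQuot p h).eval (Polynomial.C z) * (Polynomial.C z - h)
      = Polynomial.C (p.eval z) - p.comp h := by
  have h1 := congrArg (Polynomial.eval (Polynomial.C z)) (dq_spec p h)
  have h2 : Polynomial.eval (Polynomial.C z)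
      (p.map (Polynomial.C : ℂ →+* Polynomial ℂ)) = Polynomial.C (p.eval z) := by
    rw [Polynomial.eval_map]
    have := Polynomial.hom_eval₂ p (RingHom.id ℂ)
      (Polynomial.C : ℂ →+* Polynomial ℂ) z
    simpa using this.symm
  simpa [h2] using h1

lemma dq_eval_unique (p h : Polynomial ℂ) (hdeg : 1 ≤ h.natDegree) (z : ℂ)
    (w : Polynomial ℂ)
    (hw : w * (Polynomial.C z - h) = Polynomial.C (p.eval z) - p.comp h) :
    w = (diffQuot p h).eval (Polynomial.C z) := by
  have := dq_eval_spec p h z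
  have h2 : w * (Polynomial.C z - h)
      = (diffQuot p h).eval (Polynomial.C z) * (Polynomial.C z - h) := by
    rw [hw, this]
  exact mul_right_cancel₀ (czh_ne h hdeg z) h2

lemma applyCoeff_eval (u : Polynomial ℂ →ₗ[ℂ] ℂ) (q : Polynomial (Polynomial ℂ)) (z : ℂ) :
    Polynomial.eval z (applyCoeff u q) = u (q.eval (Polynomial.C z)) := by
  rw [applyCoeff, Polynomial.sum, Polynomial.eval_finset_sum,
    Polynomial.eval_eq_sum, Polynomial.sum, map_sum]
  refine Finset.sum_congr rfl fun n _ => ?_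
  rw [Polynomial.eval_monomial]
  have h1 : q.coeff n * Polynomial.C z ^ n = z ^ n • q.coeff n := by
    rw [← Polynomial.C_pow, mul_comm, Polynomial.smul_eq_C_mul]
  rw [h1, LinearMap.map_smul, smul_eq_mul, mul_comm]

/-- At a fixed `z`, the evaluated difference-quotient kernel of a matrix polynomial. -/
def KB {N : ℕ} (h : Polynomial ℂ) (z : ℂ) (W : MatPoly N) :
    Matrix (Fin N) (Fin N) (Polynomial ℂ) :=
  Matrix.of fun i s => (diffQuot (W i s) h).eval (Polynomial.C z)

lemma evalM_assocB {N : ℕ} (U : Fin N → (Polynomial ℂ →ₗ[ℂ] ℂ)) (W : MatPoly N)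
    (h : Polynomial ℂ) (z : ℂ) :
    evalM (assocB U W h) z = applyU U ((KB h z W).mulVec (P0 N)) := by
  ext i j
  simp only [evalM, assocB, Matrix.map_apply, Matrix.of_apply, applyCoeff_eval, applyU,
    Matrix.mulVec, dotProduct, KB, P0]
  congr 1
  rw [Polynomial.eval_finset_sum]
  refine Finset.sum_congr rfl fun s _ => ?_
  rw [Polynomial.eval_mul, Polynomial.eval_C]

lemma evalM_assocG {N : ℕ} (U : Fin N → (Polynomial ℂ →ₗ[ℂ] ℂ)) (W : MatPoly N)
    (h : Polynomial ℂ) (z : ℂ) :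
    evalM (assocG U W h) z = transApply U (KB h z W) (P0 N) := by
  ext i j
  simp only [evalM, assocG, Matrix.map_apply, Matrix.of_apply, transApply, KB, P0,
    Polynomial.eval_finset_sum]
  refine Finset.sum_congr rfl fun s _ => ?_
  rw [applyCoeff_eval, Polynomial.eval_mul, Polynomial.eval_C]

lemma dq_C (a : ℂ) (h : Polynomial ℂ) : diffQuot (Polynomial.C a) h = 0 := by
  rw [diffQuot]
  simp [Polynomial.map_C]

lemma KB_constmap {N : ℕ} (h : Polynomial ℂ) (z : ℂ) (M : Matrix (Fin N) (Fin N) ℂ) :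
    KB h z (M.map fun a => Polynomial.C a) = 0 := by
  ext i j
  simp [KB, dq_C]

lemma KB_one {N : ℕ} (h : Polynomial ℂ) (z : ℂ) : KB h z (1 : MatPoly N) = 0 := by
  have : (1 : MatPoly N) = (1 : Matrix (Fin N) (Fin N) ℂ).map fun a => Polynomial.C a := by
    ext i j
    by_cases hij : i = j <;> simp [Matrix.one_apply, hij]
  rw [this, KB_constmap]

lemma compH_const {N : ℕ} (h : Polynomial ℂ) (M : Matrix (Fin N) (Fin N) ℂ) :
    compH (M.map fun a => Polynomial.C a) h = M.map fun a => Polynomial.C a := by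
  ext i j; simp [compH]

lemma compH_one {N : ℕ} (h : Polynomial ℂ) : compH (1 : MatPoly N) h = 1 := by
  ext i j
  by_cases hij : i = j <;> simp [compH, Matrix.one_apply, hij]

lemma KB_spec {N : ℕ} (h : Polynomial ℂ) (z : ℂ) (W : MatPoly N) :
    (Polynomial.C z - h) • KB h z W = (evalM W z).map Polynomial.C - compH W h := by
  refine Matrix.ext fun i j => ?_
  simp only [Matrix.smul_apply, Matrix.sub_apply, Matrix.map_apply, KB, Matrix.of_apply,
    evalM, compH, smul_eq_mul]
  rw [mul_comm]
  exact dq_eval_spec _ _ _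

lemma mapC_smul {N : ℕ} (z : ℂ) (M : Matrix (Fin N) (Fin N) ℂ) :
    (z • M).map (Polynomial.C : ℂ →+* Polynomial ℂ) = z • (M.map Polynomial.C) := by
  ext i j
  simp [Polynomial.smul_C]

lemma mapC_mul {N : ℕ} (M P : Matrix (Fin N) (Fin N) ℂ) :
    ((M * P).map (Polynomial.C : ℂ →+* Polynomial ℂ)) = M.map Polynomial.C * P.map Polynomial.C := by
  ext i j
  simp [Matrix.mul_apply, Matrix.map_apply]

lemma csmul_eq {N : ℕ} (z : ℂ) (M : Matrix (Fin N) (Fin N) (Polynomial ℂ)) :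
    z • M = (Polynomial.C z) • M := by
  refine Matrix.ext fun i j => ?_
  simp only [Matrix.smul_apply, smul_eq_mul]
  ext n
  simp [Polynomial.coeff_smul, Polynomial.coeff_C_mul]

lemma compH_recL {N : ℕ} (h : Polynomial ℂ) (W W1 W2 W3 : MatPoly N)
    (M1 M2 M3 : Matrix (Fin N) (Fin N) ℂ)
    (hyp : ∀ z : ℂ, z • evalM W z = M1 * evalM W1 z + M2 * evalM W2 z + M3 * evalM W3 z) :
    h • compH W h = M1.map Polynomial.C * compH W1 h + M2.map Polynomial.C * compH W2 h
      + M3.map Polynomial.C * compH W3 h := by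
  refine Matrix.ext fun i j => Polynomial.funext fun x => ?_
  have H := congrFun (congrFun (hyp (h.eval x)) i) j
  simp only [Matrix.smul_apply, Matrix.add_apply, Matrix.mul_apply, evalM, Matrix.map_apply,
    smul_eq_mul] at H
  simp only [Matrix.smul_apply, Matrix.add_apply, Matrix.mul_apply, Matrix.map_apply, compH,
    smul_eq_mul, Polynomial.eval_mul, Polynomial.eval_finset_sum, Polynomial.eval_comp,
    Polynomial.eval_C, Polynomial.eval_add]
  exact H

lemma compH_recR {N : ℕ} (h : Polynomial ℂ) (W W1 W2 W3 : MatPoly N)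
    (M1 M2 M3 : Matrix (Fin N) (Fin N) ℂ)
    (hyp : ∀ z : ℂ, z • evalM W z = evalM W1 z * M1 + evalM W2 z * M2 + evalM W3 z * M3) :
    h • compH W h = compH W1 h * M1.map Polynomial.C + compH W2 h * M2.map Polynomial.C
      + compH W3 h * M3.map Polynomial.C := by
  refine Matrix.ext fun i j => Polynomial.funext fun x => ?_
  have H := congrFun (congrFun (hyp (h.eval x)) i) j
  simp only [Matrix.smul_apply, Matrix.add_apply, Matrix.mul_apply, evalM, Matrix.map_apply,
    smul_eq_mul] at H
  simp only [Matrix.smul_apply, Matrix.add_apply, Matrix.mul_apply, Matrix.map_apply, compH,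
    smul_eq_mul, Polynomial.eval_mul, Polynomial.eval_finset_sum, Polynomial.eval_comp,
    Polynomial.eval_C, Polynomial.eval_add]
  exact H

lemma smul_cancel_mat {N : ℕ} {c : Polynomial ℂ} (hc : c ≠ 0)
    {M P : Matrix (Fin N) (Fin N) (Polynomial ℂ)} (hs : c • M = c • P) : M = P := by
  refine Matrix.ext fun i j => ?_
  have := congrFun (congrFun hs i) j
  simp only [Matrix.smul_apply, smul_eq_mul] at this
  exact mul_left_cancel₀ hc this

lemma KB_recL {N : ℕ} (h : Polynomial ℂ) (hdeg : 1 ≤ h.natDegree) (z : ℂ)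
    (W W1 W2 W3 : MatPoly N) (M1 M2 M3 : Matrix (Fin N) (Fin N) ℂ)
    (hyp : ∀ z : ℂ, z • evalM W z = M1 * evalM W1 z + M2 * evalM W2 z + M3 * evalM W3 z) :
    z • KB h z W + compH W h = M1.map Polynomial.C * KB h z W1
      + M2.map Polynomial.C * KB h z W2 + M3.map Polynomial.C * KB h z W3 := by
  refine smul_cancel_mat (czh_ne h hdeg z) ?_
  have e0 := KB_spec h z W
  have e1 := KB_spec h z W1
  have e2 := KB_spec h z W2
  have e3 := KB_spec h z W3
  have hmc : (Polynomial.C z) • (evalM W z).map (Polynomial.C : ℂ →+* Polynomial ℂ)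
      = M1.map Polynomial.C * (evalM W1 z).map Polynomial.C
      + M2.map Polynomial.C * (evalM W2 z).map Polynomial.C
      + M3.map Polynomial.C * (evalM W3 z).map Polynomial.C := by
    have h0 := congrArg (fun M : Matrix (Fin N) (Fin N) ℂ =>
      M.map (Polynomial.C : ℂ →+* Polynomial ℂ)) (hyp z)
    rw [← csmul_eq]
    simpa [Matrix.map_add, mapC_mul, mapC_smul] using h0
  have hch := compH_recL h W W1 W2 W3 M1 M2 M3 hyp
  rw [smul_add, smul_comm (Polynomial.C z - h) z (KB h z W), e0,
    smul_add, smul_add, ← mul_smul_comm, ← mul_smul_comm, ← mul_smul_comm, e1, e2, e3,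
    csmul_eq]
  simp only [smul_sub, sub_smul, Matrix.mul_sub]
  rw [hmc, hch]
  abel

lemma KB_recR {N : ℕ} (h : Polynomial ℂ) (hdeg : 1 ≤ h.natDegree) (z : ℂ)
    (W W1 W2 W3 : MatPoly N) (M1 M2 M3 : Matrix (Fin N) (Fin N) ℂ)
    (hyp : ∀ z : ℂ, z • evalM W z = evalM W1 z * M1 + evalM W2 z * M2 + evalM W3 z * M3) :
    z • KB h z W + compH W h = KB h z W1 * M1.map Polynomial.C
      + KB h z W2 * M2.map Polynomial.C + KB h z W3 * M3.map Polynomial.C := by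
  refine smul_cancel_mat (czh_ne h hdeg z) ?_
  have e0 := KB_spec h z W
  have e1 := KB_spec h z W1
  have e2 := KB_spec h z W2
  have e3 := KB_spec h z W3
  have hmc : (Polynomial.C z) • (evalM W z).map (Polynomial.C : ℂ →+* Polynomial ℂ)
      = (evalM W1 z).map Polynomial.C * M1.map Polynomial.C
      + (evalM W2 z).map Polynomial.C * M2.map Polynomial.C
      + (evalM W3 z).map Polynomial.C * M3.map Polynomial.C := by
    have h0 := congrArg (fun M : Matrix (Fin N) (Fin N) ℂ =>
      M.map (Polynomial.C : ℂ →+* Polynomial ℂ)) (hyp z)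
    rw [← csmul_eq]
    simpa [Matrix.map_add, mapC_mul, mapC_smul] using h0
  have hch := compH_recR h W W1 W2 W3 M1 M2 M3 hyp
  rw [smul_add, smul_comm (Polynomial.C z - h) z (KB h z W), e0,
    smul_add, smul_add, ← smul_mul_assoc, ← smul_mul_assoc, ← smul_mul_assoc, e1, e2, e3,
    csmul_eq]
  simp only [smul_sub, sub_smul, Matrix.sub_mul]
  rw [hmc, hch]
  abel

lemma applyU_add {N : ℕ} (U : Fin N → (Polynomial ℂ →ₗ[ℂ] ℂ)) (v w : Fin N → Polynomial ℂ) :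
    applyU U (v + w) = applyU U v + applyU U w := by
  ext i j; simp [applyU]

lemma applyU_zsmul {N : ℕ} (U : Fin N → (Polynomial ℂ →ₗ[ℂ] ℂ)) (z : ℂ)
    (w : Fin N → Polynomial ℂ) :
    applyU U (z • w) = z • applyU U w := by
  ext i j; simp [applyU]

lemma applyU_mapC_mulVec {N : ℕ} (U : Fin N → (Polynomial ℂ →ₗ[ℂ] ℂ))
    (M : Matrix (Fin N) (Fin N) ℂ) (w : Fin N → Polynomial ℂ) :
    applyU U ((M.map (Polynomial.C : ℂ →+* Polynomial ℂ)).mulVec w) = M * applyU U w := by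
  ext i j
  simp only [applyU, Matrix.of_apply, Matrix.mulVec, dotProduct, Matrix.map_apply,
    Matrix.mul_apply]
  rw [map_sum]
  refine Finset.sum_congr rfl fun t _ => ?_
  rw [← Polynomial.smul_eq_C_mul, LinearMap.map_smul, smul_eq_mul]

lemma transApply_add {N : ℕ} (U : Fin N → (Polynomial ℂ →ₗ[ℂ] ℂ))
    (K L : Matrix (Fin N) (Fin N) (Polynomial ℂ)) (P : Fin N → Polynomial ℂ) :
    transApply U (K + L) P = transApply U K P + transApply U L P := by
  ext i j
  simp [transApply, add_mul, Finset.sum_add_distrib]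

lemma transApply_zsmul {N : ℕ} (U : Fin N → (Polynomial ℂ →ₗ[ℂ] ℂ)) (z : ℂ)
    (K : Matrix (Fin N) (Fin N) (Polynomial ℂ)) (P : Fin N → Polynomial ℂ) :
    transApply U (z • K) P = z • transApply U K P := by
  ext i j
  simp only [transApply, Matrix.of_apply, Matrix.smul_apply, smul_eq_mul]
  rw [Finset.mul_sum]
  refine Finset.sum_congr rfl fun s _ => ?_
  rw [smul_mul_assoc, LinearMap.map_smul, smul_eq_mul]

lemma transApply_mul_mapC {N : ℕ} (U : Fin N → (Polynomial ℂ →ₗ[ℂ] ℂ))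
    (K : Matrix (Fin N) (Fin N) (Polynomial ℂ)) (M : Matrix (Fin N) (Fin N) ℂ)
    (P : Fin N → Polynomial ℂ) :
    transApply U (K * M.map (Polynomial.C : ℂ →+* Polynomial ℂ)) P
      = transApply U K P * M := by
  ext i j
  simp only [transApply, Matrix.of_apply, Matrix.mul_apply, Matrix.map_apply]
  have key : ∀ s, (U s) ((∑ t, K s t * Polynomial.C (M t j)) * P i)
      = ∑ t, (U s) (K s t * P i) * M t j := by
    intro s
    rw [Finset.sum_mul, map_sum]
    refine Finset.sum_congr rfl fun t _ => ?_
    have e : K s t * Polynomial.C (M t j) * P i = M t j • (K s t * P i) := by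
      rw [Polynomial.smul_eq_C_mul]; ring
    rw [e, LinearMap.map_smul, smul_eq_mul, mul_comm]
  simp only [key]
  rw [Finset.sum_comm]
  refine Finset.sum_congr rfl fun t _ => ?_
  rw [Finset.sum_mul]

lemma transApply_constmap {N : ℕ} (U : Fin N → (Polynomial ℂ →ₗ[ℂ] ℂ))
    (M : Matrix (Fin N) (Fin N) ℂ) (P : Fin N → Polynomial ℂ) :
    transApply U (M.map fun a => (Polynomial.C a : Polynomial ℂ)) P
      = applyU U P * M := by
  ext i j
  simp only [transApply, Matrix.of_apply, Matrix.map_apply, applyU, Matrix.mul_apply]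
  refine Finset.sum_congr rfl fun s _ => ?_
  rw [← Polynomial.smul_eq_C_mul, LinearMap.map_smul, smul_eq_mul, mul_comm]

lemma evalM_one {N : ℕ} (z : ℂ) : evalM (1 : MatPoly N) z = 1 := by
  ext i j
  by_cases hij : i = j <;> simp [evalM, Matrix.one_apply, hij]

lemma evalM_constmap {N : ℕ} (z : ℂ) (M : Matrix (Fin N) (Fin N) ℂ) :
    evalM (M.map fun a => (Polynomial.C a : Polynomial ℂ)) z = M := by
  ext i j; simp [evalM]

/-- **Liouville–Ostrogradski type formula.**  Under the bi-orthogonality setup,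
for every `m ≥ 0` and all `z ∈ ℂ`:
`B⁽¹⁾_m(z) G_m(z) - V_{m+1}(z) G⁽¹⁾_{m-1}(z) = A_m⁻¹`.
Here `B⁽¹⁾_m = assocB U (V (m+1)) h` and `G⁽¹⁾_{m-1} = G1seq U G h m`
(with `G⁽¹⁾_{-1} = 0`). -/
theorem liouville_ostrogradski
    (N : ℕ) (hN : 1 ≤ N)
    (U : Fin N → (Polynomial ℂ →ₗ[ℂ] ℂ))
    (h : Polynomial ℂ) (hdeg : h.natDegree = N)
    (A B C : ℕ → Matrix (Fin N) (Fin N) ℂ)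
    (hA : ∀ m, IsUnit (A m)) (hC : ∀ m, IsUnit (C m))
    (V G : ℕ → MatPoly N)
    (hV0I : V 0 = 1)
    (g0 : Matrix (Fin N) (Fin N) ℂ) (hg0 : IsUnit g0)
    (hG0c : G 0 = g0.map fun a => Polynomial.C a)
    (hVrec0 : ∀ z : ℂ, z • evalM (V 0) z = A 0 * evalM (V 1) z + B 0 * evalM (V 0) z)
    (hVrec : ∀ (m : ℕ) (z : ℂ), z • evalM (V (m + 1)) z =
      A (m + 1) * evalM (V (m + 2)) z + B (m + 1) * evalM (V (m + 1)) z +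
        C (m + 1) * evalM (V m) z)
    (hGrec0 : ∀ z : ℂ, z • evalM (G 0) z = evalM (G 0) z * B 0 + evalM (G 1) z * C 1)
    (hGrec : ∀ (m : ℕ) (z : ℂ), z • evalM (G (m + 1)) z =
      evalM (G m) z * A m + evalM (G (m + 1)) z * B (m + 1) +
        evalM (G (m + 2)) z * C (m + 2))
    (hleft : ∀ m, ∀ k < m, applyU U (fun i => h ^ k * Bvec (V m) h i) = 0)
    (hleftn : ∀ m, IsUnit (applyU U fun i => h ^ m * Bvec (V m) h i))
    (hright : ∀ m, ∀ j < m,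
      transApply U (compH (G m) h) (fun i => h ^ j * P0 N i) = 0)
    (hrightn : ∀ m, IsUnit (transApply U (compH (G m) h) fun i => h ^ m * P0 N i))
    (hbi : ∀ n m, transApply U (compH (G n) h) (Bvec (V m) h) =
      if n = m then 1 else 0) :
    ∀ (m : ℕ) (z : ℂ),
      evalM (assocB U (V (m + 1)) h) z * evalM (G m) z
        - evalM (V (m + 1)) z * evalM (G1seq U G h m) z = (A m)⁻¹ := by
  intro m z
  have hdeg1 : 1 ≤ h.natDegree := by rw [hdeg]; exact hN
  set QQ : ℕ → Matrix (Fin N) (Fin N) ℂ := fun k => evalM (B1seq U V h k) z with hQQ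
  set SS : ℕ → Matrix (Fin N) (Fin N) ℂ := fun k => evalM (G1seq U G h k) z with hSS
  set VV : ℕ → Matrix (Fin N) (Fin N) ℂ := fun k => evalM (V k) z with hVV
  set GG : ℕ → Matrix (Fin N) (Fin N) ℂ := fun k => evalM (G k) z with hGG
  have eQQ : ∀ k, QQ k = evalM (B1seq U V h k) z := fun _ => rfl
  have eSS : ∀ k, SS k = evalM (G1seq U G h k) z := fun _ => rfl
  have eVV : ∀ k, VV k = evalM (V k) z := fun _ => rfl
  have eGG : ∀ k, GG k = evalM (G k) z := fun _ => rfl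
  -- uniform representations
  have repQ : ∀ k, QQ k = applyU U ((KB h z (V k)).mulVec (P0 N)) := by
    intro k
    cases k with
    | zero =>
      rw [hQQ]
      simp only [B1seq, if_pos rfl]
      rw [hV0I, KB_one, Matrix.zero_mulVec]
      ext i j
      simp [evalM, applyU]
    | succ k =>
      rw [hQQ]
      simp only [B1seq, Nat.succ_ne_zero, if_neg]
      exact evalM_assocB U (V (k+1)) h z
  have repS : ∀ k, SS k = transApply U (KB h z (G k)) (P0 N) := by
    intro k
    cases k with
    | zero =>
      rw [hSS]
      simp only [G1seq, if_pos rfl]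
      rw [hG0c, KB_constmap]
      ext i j
      simp [evalM, transApply]
    | succ k =>
      rw [hSS]
      simp only [G1seq, Nat.succ_ne_zero, if_neg]
      exact evalM_assocG U (G (k+1)) h z
  -- orthogonality consequences
  have orthB : ∀ k : ℕ, applyU U (Bvec (V (k+1)) h) = 0 := by
    intro k
    have := hleft (k+1) 0 (Nat.succ_pos k)
    simpa using this
  have orthG : ∀ k : ℕ, transApply U (compH (G (k+1)) h) (P0 N) = 0 := by
    intro k
    have := hright (k+1) 0 (Nat.succ_pos k)
    simpa using this
  -- recurrence for QQ
  have recQ : ∀ k : ℕ, z • QQ (k+1) =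
      A (k+1) * QQ (k+2) + B (k+1) * QQ (k+1) + C (k+1) * QQ k := by
    intro k
    have KK := KB_recL h hdeg1 z (V (k+1)) (V (k+2)) (V (k+1)) (V k)
      (A (k+1)) (B (k+1)) (C (k+1)) (hVrec k)
    have := congrArg (fun K : Matrix (Fin N) (Fin N) (Polynomial ℂ) =>
      applyU U (K.mulVec (P0 N))) KK
    simp only [Matrix.add_mulVec, Matrix.smul_mulVec, ← Matrix.mulVec_mulVec] at this
    rw [applyU_add, applyU_zsmul, applyU_add, applyU_add] at this
    rw [applyU_mapC_mulVec, applyU_mapC_mulVec, applyU_mapC_mulVec] at this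
    have hB : applyU U ((compH (V (k+1)) h).mulVec (P0 N)) = 0 := orthB k
    rw [hB, add_zero] at this
    rw [repQ (k+1), repQ (k+2), repQ k]
    exact this
  -- recurrence for SS
  have recS : ∀ k : ℕ, z • SS (k+1) =
      SS k * A k + SS (k+1) * B (k+1) + SS (k+2) * C (k+2) := by
    intro k
    have KK := KB_recR h hdeg1 z (G (k+1)) (G k) (G (k+1)) (G (k+2))
      (A k) (B (k+1)) (C (k+2)) (hGrec k)
    have := congrArg (fun K : Matrix (Fin N) (Fin N) (Polynomial ℂ) =>
      transApply U K (P0 N)) KK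
    rw [transApply_add, transApply_zsmul, transApply_add, transApply_add] at this
    rw [transApply_mul_mapC, transApply_mul_mapC, transApply_mul_mapC] at this
    rw [orthG k, add_zero] at this
    rw [repS (k+1), repS (k+2), repS k]
    exact this
  -- base facts
  have hUP : applyU U (P0 N) * g0 = 1 := by
    have := hbi 0 0
    rw [if_pos rfl] at this
    rw [hG0c, compH_const] at this
    have hBv : Bvec (V 0) h = P0 N := by
      rw [hV0I]
      funext i
      rw [Bvec, compH_one, Matrix.one_mulVec]
    rw [hBv, transApply_constmap] at this
    exact this
  have hUP' : g0 * applyU U (P0 N) = 1 := mul_eq_one_comm.mp hUP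
  have baseQ : A 0 * QQ 1 = applyU U (P0 N) := by
    have hyp0 : ∀ z : ℂ, z • evalM (V 0) z = A 0 * evalM (V 1) z + B 0 * evalM (V 0) z
        + (0 : Matrix (Fin N) (Fin N) ℂ) * evalM (V 0) z := by
      intro w
      rw [hVrec0 w]
      simp
    have KK := KB_recL h hdeg1 z (V 0) (V 1) (V 0) (V 0) (A 0) (B 0) 0 hyp0
    rw [hV0I, KB_one, compH_one, smul_zero, zero_add] at KK
    have hz : ((0 : Matrix (Fin N) (Fin N) ℂ).map (Polynomial.C : ℂ →+* Polynomial ℂ)) = 0 := by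
      ext i j; simp
    rw [hz, Matrix.mul_zero, Matrix.mul_zero, add_zero, add_zero] at KK
    have := congrArg (fun K : Matrix (Fin N) (Fin N) (Polynomial ℂ) =>
      applyU U (K.mulVec (P0 N))) KK
    simp only [Matrix.one_mulVec, ← Matrix.mulVec_mulVec] at this
    rw [applyU_mapC_mulVec] at this
    rw [repQ 1]
    exact this.symm
  have baseS : SS 1 * C 1 = 1 := by
    have hyp0 : ∀ z : ℂ, z • evalM (G 0) z = evalM (G 0) z * B 0 + evalM (G 1) z * C 1
        + evalM (G 0) z * (0 : Matrix (Fin N) (Fin N) ℂ) := by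
      intro w
      rw [hGrec0 w]
      simp
    have KK := KB_recR h hdeg1 z (G 0) (G 0) (G 1) (G 0) (B 0) (C 1) 0 hyp0
    rw [hG0c, KB_constmap, compH_const, smul_zero, zero_add] at KK
    have hz : ((0 : Matrix (Fin N) (Fin N) ℂ).map (Polynomial.C : ℂ →+* Polynomial ℂ)) = 0 := by
      ext i j; simp
    rw [hz, Matrix.zero_mul, Matrix.mul_zero, zero_add, add_zero] at KK
    have := congrArg (fun K : Matrix (Fin N) (Fin N) (Polynomial ℂ) =>
      transApply U K (P0 N)) KK
    rw [transApply_mul_mapC, transApply_constmap] at this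
    rw [repS 1, ← this]
    exact hUP
  have baseVV : VV 0 = 1 := by rw [hVV]; simp only [hV0I]; exact evalM_one z
  have baseGG : GG 0 = g0 := by rw [hGG]; simp only [hG0c]; exact evalM_constmap z g0
  have baseQQ0 : QQ 0 = 0 := by
    rw [hQQ]; simp only [B1seq, if_pos rfl]
    ext i j; simp [evalM]
  have baseSS0 : SS 0 = 0 := by
    rw [hSS]; simp only [G1seq, if_pos rfl]
    ext i j; simp [evalM]
  -- the four Liouville–Ostrogradski identities, by induction
  have E : ∀ k : ℕ,
      (GG (k+1) * C (k+1) * VV k - GG k * A k * VV (k+1) = 0)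
      ∧ (GG (k+1) * C (k+1) * QQ k - GG k * A k * QQ (k+1) = -1)
      ∧ (SS (k+1) * C (k+1) * VV k - SS k * A k * VV (k+1) = 1)
      ∧ (SS (k+1) * C (k+1) * QQ k - SS k * A k * QQ (k+1) = 0) := by
    intro k
    induction k with
    | zero =>
      have hg1 : GG 1 * C 1 = z • g0 - g0 * B 0 := by
        have := hGrec0 z
        rw [← eGG 0, ← eGG 1, baseGG] at this
        rw [eq_sub_iff_add_eq, this]
        abel
      have hv1 : g0 * (A 0 * VV 1) = z • g0 - g0 * B 0 := by
        have := hVrec0 z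
        rw [← eVV 0, ← eVV 1, baseVV, mul_one] at this
        have h2 : A 0 * VV 1 = z • (1 : Matrix (Fin N) (Fin N) ℂ) - B 0 := by
          rw [eq_sub_iff_add_eq, this]
        rw [h2, Matrix.mul_sub, mul_smul_comm, mul_one]
      refine ⟨?_, ?_, ?_, ?_⟩
      · rw [baseVV, baseGG, mul_one, hg1, mul_assoc, hv1]
        abel
      · rw [baseQQ0, baseGG, Matrix.mul_zero, mul_assoc, baseQ, hUP']
        abel
      · rw [baseVV, baseSS0, mul_one, baseS, Matrix.zero_mul, Matrix.zero_mul]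
        abel
      · rw [baseQQ0, baseSS0, Matrix.mul_zero, Matrix.zero_mul, Matrix.zero_mul]
        abel
    | succ k ih =>
      obtain ⟨ih1, ih2, ih3, ih4⟩ := ih
      have keyA : A (k+1) * VV (k+2) = z • VV (k+1) - B (k+1) * VV (k+1) - C (k+1) * VV k := by
        have := hVrec k z
        rw [← eVV k, ← eVV (k+1), ← eVV (k+2)] at this
        rw [this]; abel
      have keyAQ : A (k+1) * QQ (k+2) = z • QQ (k+1) - B (k+1) * QQ (k+1) - C (k+1) * QQ k := by
        rw [recQ k]; abel
      have keyG : GG (k+2) * C (k+2) = z • GG (k+1) - GG k * A k - GG (k+1) * B (k+1) := by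
        have := hGrec k z
        rw [← eGG k, ← eGG (k+1), ← eGG (k+2)] at this
        rw [this]; abel
      have keyS : SS (k+2) * C (k+2) = z • SS (k+1) - SS k * A k - SS (k+1) * B (k+1) := by
        rw [recS k]; abel
      have ihe1 : GG (k+1) * (C (k+1) * VV k) = GG k * (A k * VV (k+1)) := by
        have := sub_eq_zero.mp ih1
        rw [mul_assoc, mul_assoc] at this
        exact this
      have ihe2 : GG (k+1) * (C (k+1) * QQ k) = -1 + GG k * (A k * QQ (k+1)) := by
        have := sub_eq_iff_eq_add.mp ih2
        rw [mul_assoc, mul_assoc] at this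
        exact this
      have ihe3 : SS (k+1) * (C (k+1) * VV k) = 1 + SS k * (A k * VV (k+1)) := by
        have := sub_eq_iff_eq_add.mp ih3
        rw [mul_assoc, mul_assoc] at this
        exact this
      have ihe4 : SS (k+1) * (C (k+1) * QQ k) = SS k * (A k * QQ (k+1)) := by
        have := sub_eq_zero.mp ih4
        rw [mul_assoc, mul_assoc] at this
        exact this
      refine ⟨?_, ?_, ?_, ?_⟩
      · rw [keyG, mul_assoc (GG (k+1)), keyA]
        simp only [Matrix.sub_mul, Matrix.mul_sub, smul_mul_assoc, mul_smul_comm,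
          mul_assoc]
        rw [ihe1]
        abel
      · rw [keyG, mul_assoc (GG (k+1)), keyAQ]
        simp only [Matrix.sub_mul, Matrix.mul_sub, smul_mul_assoc, mul_smul_comm,
          mul_assoc]
        rw [ihe2]
        abel
      · rw [keyS, mul_assoc (SS (k+1)), keyA]
        simp only [Matrix.sub_mul, Matrix.mul_sub, smul_mul_assoc, mul_smul_comm,
          mul_assoc]
        rw [ihe3]
        abel
      · rw [keyS, mul_assoc (SS (k+1)), keyAQ]
        simp only [Matrix.sub_mul, Matrix.mul_sub, smul_mul_assoc, mul_smul_comm,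
          mul_assoc]
        rw [ihe4]
        abel
  obtain ⟨E1, E2, E3, E4⟩ := E m
  -- block matrix step
  have claim : (Matrix.fromBlocks (-(SS m * A m)) (SS (m+1) * C (m+1))
      (GG m * A m) (-(GG (m+1) * C (m+1)))) *
      (Matrix.fromBlocks (VV (m+1)) (QQ (m+1)) (VV m) (QQ m)) = 1 := by
    rw [Matrix.fromBlocks_multiply]
    have b11 : -(SS m * A m) * VV (m+1) + SS (m+1) * C (m+1) * VV m = 1 := by
      rw [← E3]; simp only [Matrix.neg_mul]; abel
    have b12 : -(SS m * A m) * QQ (m+1) + SS (m+1) * C (m+1) * QQ m = 0 := by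
      rw [← E4]; simp only [Matrix.neg_mul]; abel
    have b21 : GG m * A m * VV (m+1) + -(GG (m+1) * C (m+1)) * VV m = 0 := by
      have : GG m * A m * VV (m+1) + -(GG (m+1) * C (m+1)) * VV m
          = -(GG (m+1) * C (m+1) * VV m - GG m * A m * VV (m+1)) := by
        simp only [Matrix.neg_mul]; abel
      rw [this, E1, neg_zero]
    have b22 : GG m * A m * QQ (m+1) + -(GG (m+1) * C (m+1)) * QQ m = 1 := by
      have : GG m * A m * QQ (m+1) + -(GG (m+1) * C (m+1)) * QQ m
          = -(GG (m+1) * C (m+1) * QQ m - GG m * A m * QQ (m+1)) := by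
        simp only [Matrix.neg_mul]; abel
      rw [this, E2, neg_neg]
    rw [b11, b12, b21, b22, ← Matrix.fromBlocks_one]
  have claim' := mul_eq_one_comm.mp claim
  rw [Matrix.fromBlocks_multiply] at claim'
  have key := congrArg Matrix.toBlocks₁₁ claim'
  rw [← Matrix.fromBlocks_one] at key
  simp only [Matrix.toBlocks_fromBlocks₁₁] at key
  -- key : VV (m+1) * -(SS m * A m) + QQ (m+1) * (GG m * A m) = 1
  have main : (QQ (m+1) * GG m - VV (m+1) * SS m) * A m = 1 := by
    rw [← key]
    simp only [Matrix.sub_mul, mul_assoc, Matrix.mul_neg]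
    abel
  have inv := Matrix.inv_eq_left_inv main
  have hQm : QQ (m+1) = evalM (assocB U (V (m+1)) h) z := by
    rw [eQQ (m+1)]
    simp [B1seq]
  rw [← eGG m, ← eSS m, ← eVV (m+1), ← hQm]
  exact inv.symm


end
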